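/- With the notation of the previous statement (I₊, I₋ nonempty, ρ₊, ρ₋, c = (ρ₊−ρ₋)/2, d = (ρ₊+ρ₋)/2), the decrease in mean squared error satisfies (1/m)·Σᵢ yᵢ² − (1/m)·Σᵢ (yᵢ − c·sign(w·xᵢ+b) − d)² = (1/m)·[ (Σ_{i∈I₊} yᵢ)²/|I₊| + (Σ_{i∈I₋} yᵢ)²/|I₋| ] ≥ 0, and this quantity equals (c+d)(c−d) = ρ₊·(−ρ₋) whenever Σᵢ yᵢ = 0. -/
import Mathlib


/-- The sign function: +1 if the input is nonnegative, -1 otherwise. -/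
noncomputable def sgn (z : ℝ) : ℝ := if 0 ≤ z then 1 else -1

open scoped Classical in
theorem stmt6 (m n : ℕ) (hm : 0 < m) (x : Fin m → Fin n → ℝ) (y : Fin m → ℝ)
    (w : Fin n → ℝ) (b : ℝ)
    (s : Fin m → ℝ) (hs : ∀ i, s i = sgn ((∑ j, w j * x i j) + b))
    (Ip Im : Finset (Fin m))
    (hIp : Ip = Finset.univ.filter (fun i => s i = 1))
    (hIm : Im = Finset.univ.filter (fun i => s i = -1))
    (hp : Ip.Nonempty) (hm' : Im.Nonempty)
    (ρp ρm c d : ℝ)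
    (hρp : ρp = (∑ i ∈ Ip, y i) / (Ip.card : ℝ))
    (hρm : ρm = (∑ i ∈ Im, y i) / (Im.card : ℝ))
    (hc : c = (ρp - ρm) / 2) (hd : d = (ρp + ρm) / 2) :
    ((1 / m) * ∑ i, (y i) ^ 2 - (1 / m) * ∑ i, (y i - c * s i - d) ^ 2 =
      (1 / m) * ((∑ i ∈ Ip, y i) ^ 2 / (Ip.card : ℝ) +
        (∑ i ∈ Im, y i) ^ 2 / (Im.card : ℝ))) ∧
    (0 ≤ (1 / m) * ((∑ i ∈ Ip, y i) ^ 2 / (Ip.card : ℝ) +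
        (∑ i ∈ Im, y i) ^ 2 / (Im.card : ℝ))) ∧
    ((∑ i, y i) = 0 →
      (1 / m) * ∑ i, (y i) ^ 2 - (1 / m) * ∑ i, (y i - c * s i - d) ^ 2 =
        (c + d) * (c - d) ∧ (c + d) * (c - d) = ρp * (-ρm)) := by
  have hsval : ∀ i, s i = 1 ∨ s i = -1 := by
    intro i; rw [hs]; unfold sgn; split <;> simp
  have hcup : Ip ∪ Im = Finset.univ := by
    rw [hIp, hIm]; ext i
    simp only [Finset.mem_union, Finset.mem_filter, Finset.mem_univ, true_and, iff_true]
    exact hsval i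
  have hdisj : Disjoint Ip Im := by
    rw [hIp, hIm, Finset.disjoint_left]
    intro i h1 h2
    simp only [Finset.mem_filter, Finset.mem_univ, true_and] at h1 h2
    rw [h1] at h2; norm_num at h2
  have hcard : Ip.card + Im.card = m := by
    have h := Finset.card_union_of_disjoint hdisj
    rw [hcup, Finset.card_univ, Fintype.card_fin] at h
    omega
  have hsplit : ∀ f : Fin m → ℝ, ∑ i, f i = ∑ i ∈ Ip, f i + ∑ i ∈ Im, f i := by
    intro f; rw [← Finset.sum_union hdisj, hcup]
  set p : ℝ := (Ip.card : ℝ) with hpdef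
  set q : ℝ := (Im.card : ℝ) with hqdef
  have hp0 : 0 < p := by rw [hpdef]; exact_mod_cast Finset.card_pos.mpr hp
  have hq0 : 0 < q := by rw [hqdef]; exact_mod_cast Finset.card_pos.mpr hm'
  have hm0 : 0 < (m : ℝ) := by exact_mod_cast hm
  have hpq : p + q = m := by rw [hpdef, hqdef]; exact_mod_cast hcard
  set Sp : ℝ := ∑ i ∈ Ip, y i with hSp
  set Sm : ℝ := ∑ i ∈ Im, y i with hSm
  have h1 : ∀ i ∈ Ip, (y i - c * s i - d) ^ 2 = (y i - ρp) ^ 2 := by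
    intro i hi
    rw [hIp] at hi
    simp only [Finset.mem_filter, Finset.mem_univ, true_and] at hi
    rw [hi, hc, hd]; ring
  have h2 : ∀ i ∈ Im, (y i - c * s i - d) ^ 2 = (y i - ρm) ^ 2 := by
    intro i hi
    rw [hIm] at hi
    simp only [Finset.mem_filter, Finset.mem_univ, true_and] at hi
    rw [hi, hc, hd]; ring
  have expand : ∀ (T : Finset (Fin m)) (r : ℝ),
      ∑ i ∈ T, (y i - r) ^ 2 =
        ∑ i ∈ T, (y i) ^ 2 - 2 * r * (∑ i ∈ T, y i) + (T.card : ℝ) * r ^ 2 := by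
    intro T r
    have : ∀ i ∈ T, (y i - r) ^ 2 = (y i) ^ 2 - 2 * r * y i + r ^ 2 := by
      intro i _; ring
    rw [Finset.sum_congr rfl this, Finset.sum_add_distrib, Finset.sum_sub_distrib,
      ← Finset.mul_sum, Finset.sum_const, nsmul_eq_mul]
  have hsum2 : ∑ i, (y i - c * s i - d) ^ 2 =
      (∑ i ∈ Ip, (y i) ^ 2 - 2 * ρp * Sp + p * ρp ^ 2) +
      (∑ i ∈ Im, (y i) ^ 2 - 2 * ρm * Sm + q * ρm ^ 2) := by
    rw [hsplit, Finset.sum_congr rfl h1, Finset.sum_congr rfl h2, expand, expand]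
  have key : (1 / m) * ∑ i, (y i) ^ 2 - (1 / m) * ∑ i, (y i - c * s i - d) ^ 2 =
      (1 / m) * (Sp ^ 2 / p + Sm ^ 2 / q) := by
    rw [hsum2, hsplit fun i => (y i) ^ 2, hρp, hρm]
    field_simp
    ring
  refine ⟨key, by positivity, fun hzero => ?_⟩
  have hSm' : Sm = -Sp := by
    have := hsplit y
    rw [hzero] at this
    linarith [this]
  have hcd1 : c + d = ρp := by rw [hc, hd]; ring
  have hcd2 : c - d = -ρm := by rw [hc, hd]; ring
  constructor
  · have alg : ∀ P Q S : ℝ, 0 < P → 0 < Q →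
        1 / (P + Q) * (S ^ 2 / P + (-S) ^ 2 / Q) = S / P * -(-S / Q) := by
      intro P Q S hP hQ
      field_simp
      ring
    rw [key, hcd1, hcd2, hρp, hρm, hSm', ← hpq]
    exact alg p q Sp hp0 hq0
  · rw [hcd1, hcd2]
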